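/- Assume: consistency for a ∈ {0,1,2}; trial exchangeability over A for a=0,1 with trial positivity for a=0,1; external exchangeability over A for a=0,2 with external positivity for a=0,2; positivity P(S=1|X=x)>0 and P(S=0|X=x)>0 for every x with P(X=x,S=2)>0; transportability of conditional difference effects from the trial to the third population for (1,0): E[Y¹−Y⁰|X=x,S=2]=E[Y¹−Y⁰|X=x,S=1]; and from the external source for (2,0): E[Y²−Y⁰|X=x,S=2]=E[Y²−Y⁰|X=x,S=0] (each for x with the relevant joint probabilities positive). Then E[Y¹ − Y² | S=2] equals φ* := Σ_x [(E[Y|X=x,S=1,A=1] − E[Y|X=x,S=1,A=0]) − (E[Y|X=x,S=0,A=2] − E[Y|X=x,S=0,A=0])] · P(X=x | S=2). -/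
import Mathlib


open Finset
open scoped Classical

noncomputable def pr {Ω : Type*} [Fintype Ω] (P : Ω → ℝ) (E : Ω → Prop) : ℝ :=
  ∑ ω, if E ω then P ω else 0

noncomputable def cexp {Ω : Type*} [Fintype Ω] (P : Ω → ℝ) (Y : Ω → ℝ) (E : Ω → Prop) : ℝ :=
  (∑ ω, if E ω then Y ω * P ω else 0) / pr P E

noncomputable def cpr {Ω : Type*} [Fintype Ω] (P : Ω → ℝ) (E F : Ω → Prop) : ℝ :=
  pr P (fun ω => E ω ∧ F ω) / pr P F


section Aux
variable {Ω : Type*} [Fintype Ω] (P : Ω → ℝ)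

lemma pr_nonneg (hP : ∀ ω, 0 ≤ P ω) (E : Ω → Prop) : 0 ≤ pr P E := by
  apply Finset.sum_nonneg
  intro ω _
  split
  · exact hP ω
  · exact le_rfl

lemma pr_congr (E F : Ω → Prop) (h : ∀ ω, E ω ↔ F ω) : pr P E = pr P F := by
  unfold pr
  apply Finset.sum_congr rfl
  intro ω _
  simp [h ω]

lemma pr_zero (hP : ∀ ω, 0 ≤ P ω) (E : Ω → Prop) (h : pr P E = 0) :
    ∀ ω, E ω → P ω = 0 := by
  intro ω hω
  have hnn : ∀ i ∈ Finset.univ, (0:ℝ) ≤ if E i then P i else 0 := by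
    intro i _
    split
    · exact hP i
    · exact le_rfl
  have := (Finset.sum_eq_zero_iff_of_nonneg hnn).mp h ω (Finset.mem_univ ω)
  rwa [if_pos hω] at this

lemma cexp_congr (f g : Ω → ℝ) (E : Ω → Prop) (h : ∀ ω, E ω → f ω = g ω) :
    cexp P f E = cexp P g E := by
  unfold cexp
  congr 1
  apply Finset.sum_congr rfl
  intro ω _
  split
  · rw [h ω ‹_›]
  · rfl

lemma cexp_sub (f g : Ω → ℝ) (E : Ω → Prop) :
    cexp P (fun ω => f ω - g ω) E = cexp P f E - cexp P g E := by
  unfold cexp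
  rw [← sub_div, ← Finset.sum_sub_distrib]
  congr 1
  apply Finset.sum_congr rfl
  intro ω _
  split <;> ring

lemma cexp_partition {𝓧 : Type*} [Fintype 𝓧] (hP : ∀ ω, 0 ≤ P ω)
    (X : Ω → 𝓧) (E : Ω → Prop) (f : Ω → ℝ) :
    cexp P f E = ∑ x ∈ Finset.univ.filter (fun x => 0 < pr P (fun ω => X ω = x ∧ E ω)),
      cexp P f (fun ω => X ω = x ∧ E ω) *
        (pr P (fun ω => X ω = x ∧ E ω) / pr P E) := by
  classical
  set N : 𝓧 → ℝ := fun x => ∑ ω, if X ω = x ∧ E ω then f ω * P ω else 0 with hN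
  have hsum : ∑ x, N x = ∑ ω, if E ω then f ω * P ω else 0 := by
    rw [Finset.sum_comm]
    apply Finset.sum_congr rfl
    intro ω _
    by_cases hE : E ω <;> simp [hE]
  have hstep : ∀ x ∈ Finset.univ.filter (fun x => 0 < pr P (fun ω => X ω = x ∧ E ω)),
      cexp P f (fun ω => X ω = x ∧ E ω) *
        (pr P (fun ω => X ω = x ∧ E ω) / pr P E) = N x / pr P E := by
    intro x hx
    have hD : 0 < pr P (fun ω => X ω = x ∧ E ω) := (Finset.mem_filter.mp hx).2
    unfold cexp
    rw [div_mul_div_comm, mul_comm _ (pr P fun ω => X ω = x ∧ E ω),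
      mul_div_mul_left _ _ (ne_of_gt hD), hN]
    congr 1
    apply Finset.sum_congr rfl
    intro ω _
    congr
  have hzero : ∀ x ∈ Finset.univ,
      x ∉ Finset.univ.filter (fun x => 0 < pr P (fun ω => X ω = x ∧ E ω)) →
      N x / pr P E = 0 := by
    intro x _ hx
    have hD : pr P (fun ω => X ω = x ∧ E ω) = 0 := by
      have := pr_nonneg P hP (fun ω => X ω = x ∧ E ω)
      simp only [Finset.mem_filter, Finset.mem_univ, true_and, not_lt] at hx
      linarith
    have : N x = 0 := by
      apply Finset.sum_eq_zero
      intro ω _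
      split
      · rename_i hω
        rw [pr_zero P hP _ hD ω hω, mul_zero]
      · rfl
    rw [this, zero_div]
  have hfin : ∑ x ∈ Finset.univ.filter (fun x => 0 < pr P (fun ω => X ω = x ∧ E ω)),
      N x / pr P E = cexp P f E := by
    rw [Finset.sum_subset (Finset.filter_subset _ _) hzero, ← Finset.sum_div, hsum]
    rfl
  rw [Finset.sum_congr rfl hstep, hfin]

end Aux

theorem stmt16    {Ω 𝓧 : Type*} [Fintype Ω] [Fintype 𝓧]
    (P : Ω → ℝ) (hP : ∀ ω, 0 ≤ P ω) (hPsum : ∑ ω, P ω = 1)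
    (X : Ω → 𝓧) (S : Ω → ℕ) (A : Ω → ℕ) (Y : Ω → ℝ)
    (Y0 Y1 Y2 : Ω → ℝ)
    (hS2 : 0 < pr P (fun ω => S ω = 2))
    (hcons0 : ∀ ω, A ω = 0 → Y0 ω = Y ω)
    (hcons1 : ∀ ω, A ω = 1 → Y1 ω = Y ω)
    (hcons2 : ∀ ω, A ω = 2 → Y2 ω = Y ω)
    (hexch0 : ∀ x, 0 < pr P (fun ω => X ω = x ∧ S ω = 1) → cexp P Y0 (fun ω => X ω = x ∧ S ω = 1) = cexp P Y0 (fun ω => X ω = x ∧ S ω = 1 ∧ A ω = 0))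
    (hexch1 : ∀ x, 0 < pr P (fun ω => X ω = x ∧ S ω = 1) → cexp P Y1 (fun ω => X ω = x ∧ S ω = 1) = cexp P Y1 (fun ω => X ω = x ∧ S ω = 1 ∧ A ω = 1))
    (hpos0 : ∀ x, 0 < pr P (fun ω => X ω = x ∧ S ω = 1) → 0 < cpr P (fun ω => A ω = 0) (fun ω => X ω = x ∧ S ω = 1))
    (hpos1 : ∀ x, 0 < pr P (fun ω => X ω = x ∧ S ω = 1) → 0 < cpr P (fun ω => A ω = 1) (fun ω => X ω = x ∧ S ω = 1))
    (hexchext0 : ∀ x, 0 < pr P (fun ω => X ω = x ∧ S ω = 0) → cexp P Y0 (fun ω => X ω = x ∧ S ω = 0) = cexp P Y0 (fun ω => X ω = x ∧ S ω = 0 ∧ A ω = 0))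
    (hexchext2 : ∀ x, 0 < pr P (fun ω => X ω = x ∧ S ω = 0) → cexp P Y2 (fun ω => X ω = x ∧ S ω = 0) = cexp P Y2 (fun ω => X ω = x ∧ S ω = 0 ∧ A ω = 2))
    (hposext0 : ∀ x, 0 < pr P (fun ω => X ω = x ∧ S ω = 0) → 0 < cpr P (fun ω => A ω = 0) (fun ω => X ω = x ∧ S ω = 0))
    (hposext2 : ∀ x, 0 < pr P (fun ω => X ω = x ∧ S ω = 0) → 0 < cpr P (fun ω => A ω = 2) (fun ω => X ω = x ∧ S ω = 0))
    (hpos1x : ∀ x, 0 < pr P (fun ω => X ω = x ∧ S ω = 2) → 0 < cpr P (fun ω => S ω = 1) (fun ω => X ω = x))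
    (hpos0x : ∀ x, 0 < pr P (fun ω => X ω = x ∧ S ω = 2) → 0 < cpr P (fun ω => S ω = 0) (fun ω => X ω = x))
    (htransdiff10 : ∀ x, 0 < pr P (fun ω => X ω = x ∧ S ω = 2) → 0 < pr P (fun ω => X ω = x ∧ S ω = 1) →
      cexp P (fun ω => Y1 ω - Y0 ω) (fun ω => X ω = x ∧ S ω = 2) =
      cexp P (fun ω => Y1 ω - Y0 ω) (fun ω => X ω = x ∧ S ω = 1))
    (htransdiff20 : ∀ x, 0 < pr P (fun ω => X ω = x ∧ S ω = 2) → 0 < pr P (fun ω => X ω = x ∧ S ω = 0) →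
      cexp P (fun ω => Y2 ω - Y0 ω) (fun ω => X ω = x ∧ S ω = 2) =
      cexp P (fun ω => Y2 ω - Y0 ω) (fun ω => X ω = x ∧ S ω = 0))
    : cexp P (fun ω => Y1 ω - Y2 ω) (fun ω => S ω = 2) =
      ∑ x ∈ univ.filter (fun x => 0 < pr P (fun ω => X ω = x ∧ S ω = 2)),
        ((cexp P Y (fun ω => X ω = x ∧ S ω = 1 ∧ A ω = 1) - cexp P Y (fun ω => X ω = x ∧ S ω = 1 ∧ A ω = 0)) -
          (cexp P Y (fun ω => X ω = x ∧ S ω = 0 ∧ A ω = 2) - cexp P Y (fun ω => X ω = x ∧ S ω = 0 ∧ A ω = 0))) *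
        (pr P (fun ω => X ω = x ∧ S ω = 2) / pr P (fun ω => S ω = 2)) := by
  have key : ∀ x ∈ Finset.univ.filter (fun x => 0 < pr P (fun ω => X ω = x ∧ S ω = 2)),
      cexp P (fun ω => Y1 ω - Y2 ω) (fun ω => X ω = x ∧ S ω = 2) *
        (pr P (fun ω => X ω = x ∧ S ω = 2) / pr P (fun ω => S ω = 2)) =
      ((cexp P Y (fun ω => X ω = x ∧ S ω = 1 ∧ A ω = 1) - cexp P Y (fun ω => X ω = x ∧ S ω = 1 ∧ A ω = 0)) -
        (cexp P Y (fun ω => X ω = x ∧ S ω = 0 ∧ A ω = 2) - cexp P Y (fun ω => X ω = x ∧ S ω = 0 ∧ A ω = 0))) *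
        (pr P (fun ω => X ω = x ∧ S ω = 2) / pr P (fun ω => S ω = 2)) := by
    intro x hx
    have hx2 : 0 < pr P (fun ω => X ω = x ∧ S ω = 2) := (Finset.mem_filter.mp hx).2
    have h1 : 0 < pr P (fun ω => X ω = x ∧ S ω = 1) := by
      have h := hpos1x x hx2
      unfold cpr at h
      by_contra hle
      push_neg at hle
      have h0 : pr P (fun ω => S ω = 1 ∧ X ω = x) = 0 := by
        rw [pr_congr P _ (fun ω => X ω = x ∧ S ω = 1) (fun ω => and_comm)]
        exact le_antisymm hle (pr_nonneg P hP _)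
      rw [h0, zero_div] at h
      exact lt_irrefl 0 h
    have h0 : 0 < pr P (fun ω => X ω = x ∧ S ω = 0) := by
      have h := hpos0x x hx2
      unfold cpr at h
      by_contra hle
      push_neg at hle
      have h0 : pr P (fun ω => S ω = 0 ∧ X ω = x) = 0 := by
        rw [pr_congr P _ (fun ω => X ω = x ∧ S ω = 0) (fun ω => and_comm)]
        exact le_antisymm hle (pr_nonneg P hP _)
      rw [h0, zero_div] at h
      exact lt_irrefl 0 h
    congr 1
    have e10 := htransdiff10 x hx2 h1
    have e20 := htransdiff20 x hx2 h0
    simp only [cexp_sub] at e10 e20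
    rw [hexch1 x h1, hexch0 x h1] at e10
    rw [hexchext2 x h0, hexchext0 x h0] at e20
    rw [cexp_congr P Y1 Y (fun ω => X ω = x ∧ S ω = 1 ∧ A ω = 1)
        (fun ω hω => hcons1 ω hω.2.2)] at e10
    rw [cexp_congr P Y0 Y (fun ω => X ω = x ∧ S ω = 1 ∧ A ω = 0)
        (fun ω hω => hcons0 ω hω.2.2)] at e10
    rw [cexp_congr P Y2 Y (fun ω => X ω = x ∧ S ω = 0 ∧ A ω = 2)
        (fun ω hω => hcons2 ω hω.2.2)] at e20
    rw [cexp_congr P Y0 Y (fun ω => X ω = x ∧ S ω = 0 ∧ A ω = 0)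
        (fun ω hω => hcons0 ω hω.2.2)] at e20
    rw [cexp_sub]
    linarith
  rw [cexp_partition P hP X (fun ω => S ω = 2) (fun ω => Y1 ω - Y2 ω)]
  exact Finset.sum_congr rfl key
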